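/- Let u, v, r : ℝ × ℝ × ℝ → ℝ, written as functions of (x,y,t), with u twice continuously differentiable and v, r continuously differentiable, and suppose that at every point: ∂ₜu = v, ∂ₜv = ∂ₓₓu + ∂ᵧᵧu − b(u)·r, and ∂ₜr = (1/2)·b(u)·v. Then at every point the modified local energy conservation law holds: ∂ₜ( (1/2)v² + (1/2)(∂ₓu)² + (1/2)(∂ᵧu)² + r² ) − ∂ₓ( (∂ₓu)·v ) − ∂ᵧ( (∂ᵧu)·v ) = 0. -/

import Mathlib

open Real

/-- Partial derivative in the first coordinate `x`. -/
noncomputable def px (u : ℝ × ℝ × ℝ → ℝ) : ℝ × ℝ × ℝ → ℝ :=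
  fun p => deriv (fun s => u (s, p.2.1, p.2.2)) p.1

/-- Partial derivative in the second coordinate `y`. -/
noncomputable def py (u : ℝ × ℝ × ℝ → ℝ) : ℝ × ℝ × ℝ → ℝ :=
  fun p => deriv (fun s => u (p.1, s, p.2.2)) p.2.1

/-- Partial derivative in the third coordinate `t`. -/
noncomputable def pt (u : ℝ × ℝ × ℝ → ℝ) : ℝ × ℝ × ℝ → ℝ :=
  fun p => deriv (fun s => u (p.1, p.2.1, s)) p.2.2

/-- The function `b(x) = sin x / √(2 - cos x)`. -/
noncomputable def b (x : ℝ) : ℝ := Real.sin x / Real.sqrt (2 - Real.cos x)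

section aux

variable {f : ℝ × ℝ × ℝ → ℝ} {p : ℝ × ℝ × ℝ}

lemma sliceX (hf : DifferentiableAt ℝ f p) :
    HasDerivAt (fun s => f (s, p.2.1, p.2.2)) (fderiv ℝ f p (1, 0, 0)) p.1 := by
  have hg : HasDerivAt (fun s : ℝ => ((s, p.2.1, p.2.2) : ℝ × ℝ × ℝ)) ((1:ℝ), (0:ℝ), (0:ℝ)) p.1 :=
    (hasDerivAt_id _).prodMk ((hasDerivAt_const _ _).prodMk (hasDerivAt_const _ _))
  exact hf.hasFDerivAt.comp_hasDerivAt _ hg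

lemma sliceY (hf : DifferentiableAt ℝ f p) :
    HasDerivAt (fun s => f (p.1, s, p.2.2)) (fderiv ℝ f p (0, 1, 0)) p.2.1 := by
  have hg : HasDerivAt (fun s : ℝ => ((p.1, s, p.2.2) : ℝ × ℝ × ℝ)) ((0:ℝ), (1:ℝ), (0:ℝ)) p.2.1 :=
    (hasDerivAt_const _ _).prodMk ((hasDerivAt_id _).prodMk (hasDerivAt_const _ _))
  exact hf.hasFDerivAt.comp_hasDerivAt _ hg

lemma sliceT (hf : DifferentiableAt ℝ f p) :
    HasDerivAt (fun s => f (p.1, p.2.1, s)) (fderiv ℝ f p (0, 0, 1)) p.2.2 := by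
  have hg : HasDerivAt (fun s : ℝ => ((p.1, p.2.1, s) : ℝ × ℝ × ℝ)) ((0:ℝ), (0:ℝ), (1:ℝ)) p.2.2 :=
    (hasDerivAt_const _ _).prodMk ((hasDerivAt_const _ _).prodMk (hasDerivAt_id _))
  exact hf.hasFDerivAt.comp_hasDerivAt _ hg

lemma px_eq (hf : DifferentiableAt ℝ f p) : px f p = fderiv ℝ f p (1, 0, 0) :=
  (sliceX hf).deriv

lemma py_eq (hf : DifferentiableAt ℝ f p) : py f p = fderiv ℝ f p (0, 1, 0) :=
  (sliceY hf).deriv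

lemma pt_eq (hf : DifferentiableAt ℝ f p) : pt f p = fderiv ℝ f p (0, 0, 1) :=
  (sliceT hf).deriv

lemma px_funeq (hf : Differentiable ℝ f) : px f = fun q => fderiv ℝ f q (1, 0, 0) :=
  funext fun q => px_eq (hf q)

lemma py_funeq (hf : Differentiable ℝ f) : py f = fun q => fderiv ℝ f q (0, 1, 0) :=
  funext fun q => py_eq (hf q)

lemma pt_funeq (hf : Differentiable ℝ f) : pt f = fun q => fderiv ℝ f q (0, 0, 1) :=
  funext fun q => pt_eq (hf q)

lemma contDiff_dapply (hf : ContDiff ℝ 2 f) (w : ℝ × ℝ × ℝ) :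
    ContDiff ℝ 1 (fun q => fderiv ℝ f q w) :=
  (hf.fderiv_right (m := 1) (by norm_num)).clm_apply contDiff_const

lemma fderiv_dapply (hf : ContDiff ℝ 2 f) (w z : ℝ × ℝ × ℝ) :
    fderiv ℝ (fun q => fderiv ℝ f q w) p z = fderiv ℝ (fderiv ℝ f) p z w := by
  have hF : DifferentiableAt ℝ (fderiv ℝ f) p :=
    ((hf.fderiv_right (m := 1) (by norm_num)).differentiable one_ne_zero) p
  have := ((ContinuousLinearMap.apply ℝ ℝ w).hasFDerivAt.comp p hF.hasFDerivAt).fderiv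
  calc fderiv ℝ (fun q => fderiv ℝ f q w) p z
      = (((ContinuousLinearMap.apply ℝ ℝ w).comp (fderiv ℝ (fderiv ℝ f) p)) : _) z := by
        rw [← this]; rfl
    _ = fderiv ℝ (fderiv ℝ f) p z w := rfl

lemma symm_dapply (hf : ContDiff ℝ 2 f) (w z : ℝ × ℝ × ℝ) :
    fderiv ℝ (fun q => fderiv ℝ f q w) p z = fderiv ℝ (fun q => fderiv ℝ f q z) p w := by
  rw [fderiv_dapply hf, fderiv_dapply hf]
  exact (hf.contDiffAt.isSymmSndFDerivAt (by norm_num)) z w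

end aux

theorem IEQ_system_modified_local_energy_conservation
    (u v r : ℝ × ℝ × ℝ → ℝ)
    (hu : ContDiff ℝ 2 u) (hv : ContDiff ℝ 1 v) (hr : ContDiff ℝ 1 r)
    (h1 : ∀ p : ℝ × ℝ × ℝ, pt u p = v p)
    (h2 : ∀ p : ℝ × ℝ × ℝ,
      pt v p = px (px u) p + py (py u) p - b (u p) * r p)
    (h3 : ∀ p : ℝ × ℝ × ℝ, pt r p = (1/2) * b (u p) * v p) :
    ∀ p : ℝ × ℝ × ℝ,
      pt (fun q => (1/2) * (v q)^2 + (1/2) * (px u q)^2 + (1/2) * (py u q)^2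
            + (r q)^2) p
        - px (fun q => px u q * v q) p
        - py (fun q => py u q * v q) p = 0 := by
  intro p
  have hud : Differentiable ℝ u := hu.differentiable (by norm_num)
  have hvd : Differentiable ℝ v := hv.differentiable one_ne_zero
  have hrd : Differentiable ℝ r := hr.differentiable one_ne_zero
  have hpxu : ContDiff ℝ 1 (px u) := by
    rw [px_funeq hud]; exact contDiff_dapply hu _
  have hpyu : ContDiff ℝ 1 (py u) := by
    rw [py_funeq hud]; exact contDiff_dapply hu _
  have hpxud : Differentiable ℝ (px u) := hpxu.differentiable one_ne_zero
  have hpyud : Differentiable ℝ (py u) := hpyu.differentiable one_ne_zero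
  -- mixed partial symmetry: pt (px u) = px v, pt (py u) = py v
  have hptu : pt u = v := funext h1
  have key1 : pt (px u) p = px v p := by
    rw [pt_eq (hpxud p), px_eq (hvd p), px_funeq hud, ← hptu, pt_funeq hud]
    exact symm_dapply hu _ _
  have key2 : pt (py u) p = py v p := by
    rw [pt_eq (hpyud p), py_eq (hvd p), py_funeq hud, ← hptu, pt_funeq hud]
    exact symm_dapply hu _ _
  -- slice derivatives at p
  have Hvt : HasDerivAt (fun s => v (p.1, p.2.1, s)) (pt v p) p.2.2 := by
    rw [pt_eq (hvd p)]; exact sliceT (hvd p)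
  have Hrt : HasDerivAt (fun s => r (p.1, p.2.1, s)) (pt r p) p.2.2 := by
    rw [pt_eq (hrd p)]; exact sliceT (hrd p)
  have Hxt : HasDerivAt (fun s => px u (p.1, p.2.1, s)) (pt (px u) p) p.2.2 := by
    rw [pt_eq (hpxud p)]; exact sliceT (hpxud p)
  have Hyt : HasDerivAt (fun s => py u (p.1, p.2.1, s)) (pt (py u) p) p.2.2 := by
    rw [pt_eq (hpyud p)]; exact sliceT (hpyud p)
  have HvX : HasDerivAt (fun s => v (s, p.2.1, p.2.2)) (px v p) p.1 := by
    rw [px_eq (hvd p)]; exact sliceX (hvd p)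
  have HvY : HasDerivAt (fun s => v (p.1, s, p.2.2)) (py v p) p.2.1 := by
    rw [py_eq (hvd p)]; exact sliceY (hvd p)
  have HxX : HasDerivAt (fun s => px u (s, p.2.1, p.2.2)) (px (px u) p) p.1 := by
    rw [px_eq (hpxud p)]; exact sliceX (hpxud p)
  have HyY : HasDerivAt (fun s => py u (p.1, s, p.2.2)) (py (py u) p) p.2.1 := by
    rw [py_eq (hpyud p)]; exact sliceY (hpyud p)
  -- derivative of energy in t
  have HE : HasDerivAt
      (fun s => (1/2) * (v (p.1, p.2.1, s))^2 + (1/2) * (px u (p.1, p.2.1, s))^2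
        + (1/2) * (py u (p.1, p.2.1, s))^2 + (r (p.1, p.2.1, s))^2)
      (v p * pt v p + px u p * pt (px u) p + py u p * pt (py u) p + 2 * r p * pt r p)
      p.2.2 := by
    have e1 := ((Hvt.pow 2).const_mul (1/2 : ℝ))
    have e2 := ((Hxt.pow 2).const_mul (1/2 : ℝ))
    have e3 := ((Hyt.pow 2).const_mul (1/2 : ℝ))
    have e4 := (Hrt.pow 2)
    have := ((e1.add e2).add e3).add e4
    exact this.congr_deriv (by ring)
  have hEt : pt (fun q => (1/2) * (v q)^2 + (1/2) * (px u q)^2 + (1/2) * (py u q)^2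
      + (r q)^2) p
      = v p * pt v p + px u p * pt (px u) p + py u p * pt (py u) p + 2 * r p * pt r p :=
    HE.deriv
  have hPX : px (fun q => px u q * v q) p = px (px u) p * v p + px u p * px v p :=
    (HxX.mul HvX).deriv
  have hPY : py (fun q => py u q * v q) p = py (py u) p * v p + py u p * py v p :=
    (HyY.mul HvY).deriv
  rw [hEt, hPX, hPY, key1, key2, h2, h3]
  ring
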